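/- Let L ≥ 2 and 0 < s0 < L be integers, let t ≥ 0, and let r ∈ ℤ be such that s0 + 2r − t ∈ {0, L} (i.e., the corresponding endpoint lies on an absorbing barrier). Then the method-of-images expression vanishes: Σ_{k∈ℤ} [C(t, r+kL) − C(t, r+s0+kL)] = 0. -/
import Mathlib


/-- Binomial coefficient `C(n,k)` with integer lower index `k`, equal to `0`
unless `0 ≤ k ≤ n`. -/
def Cb (n : ℕ) (k : ℤ) : ℤ := if 0 ≤ k ∧ k ≤ (n : ℤ) then (n.choose k.toNat : ℤ) else 0

lemma Cb_symm (n : ℕ) (k : ℤ) : Cb n k = Cb n ((n : ℤ) - k) := by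
  unfold Cb
  by_cases h : 0 ≤ k ∧ k ≤ (n : ℤ)
  · rw [if_pos h, if_pos (by omega)]
    have h1 : ((n : ℤ) - k).toNat = n - k.toNat := by omega
    have h2 : k.toNat ≤ n := by omega
    rw [h1, Nat.choose_symm h2]
  · rw [if_neg h, if_neg (by omega)]

lemma summable_Cb (t : ℕ) (a : ℤ) (L : ℕ) (hL : 1 ≤ L) :
    Summable (fun k : ℤ => Cb t (a + k * L)) := by
  apply summable_of_ne_finset_zero (s := Finset.Icc (-(t + |a|)) (t + |a|))
  intro k hk
  simp only [Finset.mem_Icc, not_and_or, not_le] at hk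
  have hL' : (1 : ℤ) ≤ L := by exact_mod_cast hL
  unfold Cb
  rw [if_neg]
  rintro ⟨h1, h2⟩
  have ha := abs_le.mp (le_refl |a|)
  rcases hk with hk | hk
  · -- k < -(t + |a|), so k ≤ -1 and k * L ≤ k
    have hk0 : k ≤ -1 := by omega
    have : k * L ≤ k * 1 := by
      apply mul_le_mul_of_nonpos_left hL' (by omega)
    omega
  · have hk0 : 1 ≤ k := by omega
    have : k * 1 ≤ k * L := by
      apply mul_le_mul_of_nonneg_left hL' (by omega)
    omega

/-- If the endpoint `s0 + 2r - t` lies on an absorbing barrier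
(`0` or `L`), then the method-of-images expression vanishes. -/
theorem stmt_4 (L : ℕ) (hL : 2 ≤ L) (s0 : ℤ) (hs0 : 0 < s0) (hs0L : s0 < (L : ℤ))
    (t : ℕ) (r : ℤ) (hbar : s0 + 2 * r - t = 0 ∨ s0 + 2 * r - t = (L : ℤ)) :
    ∑' k : ℤ, (Cb t (r + k * L) - Cb t (r + s0 + k * L)) = 0 := by
  have hf : Summable (fun k : ℤ => Cb t (r + k * L)) := summable_Cb t r L (by omega)
  have hg : Summable (fun k : ℤ => Cb t (r + s0 + k * L)) := summable_Cb t (r + s0) L (by omega)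
  rw [Summable.tsum_sub hf hg, sub_eq_zero]
  rcases hbar with h | h
  · -- t = s0 + 2r
    rw [← Equiv.tsum_eq (Equiv.neg ℤ) (fun k : ℤ => Cb t (r + s0 + k * L))]
    congr 1
    funext k
    show Cb t (r + k * L) = Cb t (r + s0 + (-k) * L)
    rw [Cb_symm t (r + k * L)]
    congr 1
    push_cast
    ring_nf
    omega
  · -- t = s0 + 2r - L
    rw [← Equiv.tsum_eq (⟨fun k => -(k + 1), fun k => -(k + 1), fun k => by ring, fun k => by ring⟩ : ℤ ≃ ℤ) (fun k : ℤ => Cb t (r + s0 + k * L))]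
    congr 1
    funext k
    show Cb t (r + k * L) = Cb t (r + s0 + (-(k + 1)) * L)
    rw [Cb_symm t (r + k * L)]
    congr 1
    show (t : ℤ) - (r + k * L) = r + s0 + (-(k + 1)) * L
    push_cast
    ring_nf
    omega
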